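/- Let m be a positive integer and n = 2^m - 1. The n × n matrix A over ℤ/2ℤ defined by a_{i,j} = 1 if |i - j| = 1 and a_{i,j} = 0 otherwise satisfies A^n = 0. -/

import Mathlib

open Finsupp Matrix Polynomial

namespace PathAuxZZ

/-- `w a = x^a + x^(-a)` in the group algebra of `ZMod 2^(m+1)` over `ZMod 2`. -/
noncomputable def w (m : ℕ) (a : ZMod (2^(m+1))) : AddMonoidAlgebra (ZMod 2) (ZMod (2^(m+1))) :=
  AddMonoidAlgebra.single a 1 + AddMonoidAlgebra.single (-a) 1

lemma single_self_add (m : ℕ) (a : ZMod (2^(m+1))) :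
    (AddMonoidAlgebra.single a (1 : ZMod 2) : AddMonoidAlgebra (ZMod 2) (ZMod (2^(m+1))))
      + AddMonoidAlgebra.single a 1 = 0 := by
  rw [← AddMonoidAlgebra.single_add]
  have h : (1 : ZMod 2) + 1 = 0 := by decide
  rw [h, AddMonoidAlgebra.single_zero]

lemma w_zero (m : ℕ) : w m 0 = 0 := by
  unfold w
  rw [neg_zero]
  exact single_self_add m 0

lemma cast_two_pow (m : ℕ) :
    ((2^m : ℕ) : ZMod (2^(m+1))) = -((2^m : ℕ) : ZMod (2^(m+1))) := by
  have h0 : ((2^(m+1) : ℕ) : ZMod (2^(m+1))) = 0 := ZMod.natCast_self _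
  rw [eq_neg_iff_add_eq_zero, ← Nat.cast_add, ← two_mul, ← pow_succ']
  exact h0

lemma w_two_pow (m : ℕ) : w m ((2^m : ℕ) : ZMod (2^(m+1))) = 0 := by
  unfold w
  rw [← cast_two_pow]
  exact single_self_add m _

lemma w_mul_w (m : ℕ) (a b : ZMod (2^(m+1))) :
    w m a * w m b = AddMonoidAlgebra.single (a+b) 1 + AddMonoidAlgebra.single (a-b) 1
      + AddMonoidAlgebra.single (-(a-b)) 1 + AddMonoidAlgebra.single (-(a+b)) 1 := by
  unfold w
  rw [add_mul, mul_add, mul_add]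
  repeat rw [AddMonoidAlgebra.single_mul_single]
  rw [show a + -b = a - b by ring, show -a + b = -(a-b) by ring,
    show -a + -b = -(a+b) by ring, one_mul]
  abel

lemma w_sq (m : ℕ) (a : ZMod (2^(m+1))) : w m a * w m a = w m (a + a) := by
  rw [w_mul_w]
  unfold w
  rw [sub_self, neg_zero]
  have := single_self_add m (0 : ZMod (2^(m+1)))
  rw [show AddMonoidAlgebra.single (a+a) (1:ZMod 2) + AddMonoidAlgebra.single 0 1 + AddMonoidAlgebra.single 0 1
      + AddMonoidAlgebra.single (-(a+a)) 1 = AddMonoidAlgebra.single (a+a) (1:ZMod 2) + AddMonoidAlgebra.single (-(a+a)) 1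
      + (AddMonoidAlgebra.single 0 1 + AddMonoidAlgebra.single 0 1) by abel, this, add_zero]

lemma w_pow_two_pow (m k : ℕ) : (w m 1) ^ (2^k) = w m ((2^k : ℕ) : ZMod (2^(m+1))) := by
  induction k with
  | zero => simp
  | succ k ih =>
    have h2 : (2:ℕ)^(k+1) = 2^k * 2 := pow_succ 2 k
    rw [show (w m 1) ^ (2^(k+1)) = ((w m 1)^(2^k))^2 by rw [h2, pow_mul], ih, pow_two, w_sq]
    congr 1
    push_cast [pow_succ]
    ring

lemma w_pow_eq_zero (m : ℕ) : (w m 1) ^ (2^m) = 0 := by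
  rw [w_pow_two_pow]
  exact w_two_pow m

lemma sum_ite_intCast {M : Type*} [AddCommMonoid M] (n : ℕ) (t : ℤ) (g : ℕ → M) :
    (∑ j : Fin n, if ((j : ℕ) : ℤ) = t then g (j : ℕ) else 0)
      = if 0 ≤ t ∧ t < n then g t.toNat else 0 := by
  by_cases h : 0 ≤ t ∧ t < n
  · rw [if_pos h]
    rw [Finset.sum_eq_single_of_mem (⟨t.toNat, by omega⟩ : Fin n) (Finset.mem_univ _)]
    · have ht : (((⟨t.toNat, by omega⟩ : Fin n) : ℕ) : ℤ) = t := by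
        show ((t.toNat : ℕ) : ℤ) = t
        omega
      rw [if_pos ht]
    · intro b _ hb
      rw [if_neg]
      intro hbt
      apply hb
      apply Fin.ext
      show (b : ℕ) = t.toNat
      omega
  · rw [if_neg h]
    apply Finset.sum_eq_zero
    intro j _
    rw [if_neg]
    have := j.isLt
    omega

/-- The crucial column identity: applying `A` to the `l`-th basis vector corresponds to
multiplication by `w m 1 = x + x⁻¹`. -/
lemma col_sum (m n : ℕ) (hm : 0 < m) (hn : n = 2^m - 1)
    (A : Matrix (Fin n) (Fin n) (ZMod 2))
    (hA : ∀ i j, A i j = if ((i : ℤ) - (j : ℤ)).natAbs = 1 then 1 else 0) (l : Fin n) :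
    (∑ j : Fin n, A j l • w m (((j : ℕ) + 1 : ℕ) : ZMod (2^(m+1))))
      = w m 1 * w m (((l : ℕ) + 1 : ℕ) : ZMod (2^(m+1))) := by
  have h2m : 2 ≤ 2^m := by
    calc (2:ℕ) = 2^1 := rfl
    _ ≤ 2^m := Nat.pow_le_pow_right (by norm_num) hm
  have hL : (l : ℕ) < n := l.isLt
  have step1 : ∀ j : Fin n, A j l • w m (((j : ℕ) + 1 : ℕ) : ZMod (2^(m+1)))
      = (if ((j:ℕ):ℤ) = ((l:ℕ):ℤ)+1 then w m (((j:ℕ)+1 : ℕ) : ZMod (2^(m+1))) else 0)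
      + (if ((j:ℕ):ℤ) = ((l:ℕ):ℤ)-1 then w m (((j:ℕ)+1 : ℕ) : ZMod (2^(m+1))) else 0) := by
    intro j
    rw [hA]
    by_cases h1 : ((j:ℕ):ℤ) = ((l:ℕ):ℤ)+1
    · rw [if_pos (by omega), one_smul, if_pos h1, if_neg (by omega), add_zero]
    · by_cases h2 : ((j:ℕ):ℤ) = ((l:ℕ):ℤ)-1
      · rw [if_pos (by omega), one_smul, if_neg h1, if_pos h2, zero_add]
      · rw [if_neg (by omega), zero_smul, if_neg h1, if_neg h2, add_zero]
  rw [Finset.sum_congr rfl (fun j _ => step1 j), Finset.sum_add_distrib,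
    sum_ite_intCast n (((l:ℕ):ℤ)+1) (fun x => w m ((x+1 : ℕ) : ZMod (2^(m+1)))),
    sum_ite_intCast n (((l:ℕ):ℤ)-1) (fun x => w m ((x+1 : ℕ) : ZMod (2^(m+1))))]
  rw [w_mul_w]
  -- rewrite the right-hand side exponents
  have e1 : (1 : ZMod (2^(m+1))) + (((l:ℕ)+1 : ℕ) : ZMod (2^(m+1)))
      = (((l:ℕ)+2 : ℕ) : ZMod (2^(m+1))) := by push_cast; ring
  have e2 : (1 : ZMod (2^(m+1))) - (((l:ℕ)+1 : ℕ) : ZMod (2^(m+1)))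
      = -(((l:ℕ) : ℕ) : ZMod (2^(m+1))) := by push_cast; ring
  rw [e1, e2, neg_neg]
  have hrhs : AddMonoidAlgebra.single (((l:ℕ)+2 : ℕ) : ZMod (2^(m+1))) (1 : ZMod 2)
      + AddMonoidAlgebra.single (-(((l:ℕ) : ℕ) : ZMod (2^(m+1)))) 1
      + AddMonoidAlgebra.single ((((l:ℕ) : ℕ) : ZMod (2^(m+1)))) 1
      + AddMonoidAlgebra.single (-(((l:ℕ)+2 : ℕ) : ZMod (2^(m+1)))) 1
      = w m (((l:ℕ)+2 : ℕ) : ZMod (2^(m+1))) + w m ((((l:ℕ) : ℕ)) : ZMod (2^(m+1))) := by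
    unfold w; abel
  rw [hrhs]
  congr 1
  · -- first summand: `if l+1 < n then w (l+2) else 0 = w (l+2)`
    by_cases hc : ((l:ℕ):ℤ)+1 < n
    · rw [if_pos ⟨by omega, hc⟩]
      have : (((l:ℕ):ℤ)+1).toNat = (l:ℕ)+1 := by omega
      rw [this]
    · rw [if_neg (by intro hh; exact hc hh.2)]
      have hEq : (l:ℕ)+2 = 2^m := by omega
      rw [hEq, w_two_pow]
  · -- second summand: `if 1 ≤ l then w l else 0 = w l`
    by_cases hc : 0 ≤ ((l:ℕ):ℤ)-1
    · rw [if_pos ⟨hc, by omega⟩]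
      have : ((((l:ℕ):ℤ)-1).toNat) + 1 = (l:ℕ) := by omega
      rw [this]
    · rw [if_neg (by intro hh; exact hc hh.1)]
      have hEq : ((l:ℕ) : ℕ) = 0 := by omega
      rw [hEq, Nat.cast_zero, w_zero]

/-- The embedding of vectors into the group algebra. -/
noncomputable def phi (m n : ℕ) (v : Fin n → ZMod 2) :
    AddMonoidAlgebra (ZMod 2) (ZMod (2^(m+1))) :=
  ∑ j : Fin n, v j • w m (((j : ℕ) + 1 : ℕ) : ZMod (2^(m+1)))

lemma phi_mulVec (m n : ℕ) (hm : 0 < m) (hn : n = 2^m - 1)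
    (A : Matrix (Fin n) (Fin n) (ZMod 2))
    (hA : ∀ i j, A i j = if ((i : ℤ) - (j : ℤ)).natAbs = 1 then 1 else 0)
    (v : Fin n → ZMod 2) :
    phi m n (A *ᵥ v) = w m 1 * phi m n v := by
  unfold phi
  calc ∑ j : Fin n, (A *ᵥ v) j • w m (((j : ℕ) + 1 : ℕ) : ZMod (2^(m+1)))
      = ∑ j : Fin n, ∑ l : Fin n, (A j l * v l) • w m (((j : ℕ) + 1 : ℕ) : ZMod (2^(m+1))) := by
        apply Finset.sum_congr rfl
        intro j _
        rw [show (A *ᵥ v) j = ∑ l : Fin n, A j l * v l from rfl, Finset.sum_smul]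
    _ = ∑ l : Fin n, ∑ j : Fin n, (A j l * v l) • w m (((j : ℕ) + 1 : ℕ) : ZMod (2^(m+1))) :=
        Finset.sum_comm
    _ = ∑ l : Fin n, v l • ∑ j : Fin n, A j l • w m (((j : ℕ) + 1 : ℕ) : ZMod (2^(m+1))) := by
        apply Finset.sum_congr rfl
        intro l _
        rw [Finset.smul_sum]
        apply Finset.sum_congr rfl
        intro j _
        rw [mul_comm, mul_smul]
    _ = ∑ l : Fin n, v l • (w m 1 * w m (((l : ℕ) + 1 : ℕ) : ZMod (2^(m+1)))) := by
        apply Finset.sum_congr rfl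
        intro l _
        rw [col_sum m n hm hn A hA l]
    _ = w m 1 * ∑ l : Fin n, v l • w m (((l : ℕ) + 1 : ℕ) : ZMod (2^(m+1))) := by
        rw [Finset.mul_sum]
        apply Finset.sum_congr rfl
        intro l _
        rw [mul_smul_comm]

lemma phi_pow (m n : ℕ) (hm : 0 < m) (hn : n = 2^m - 1)
    (A : Matrix (Fin n) (Fin n) (ZMod 2))
    (hA : ∀ i j, A i j = if ((i : ℤ) - (j : ℤ)).natAbs = 1 then 1 else 0)
    (t : ℕ) (v : Fin n → ZMod 2) :
    phi m n ((A ^ t) *ᵥ v) = (w m 1) ^ t * phi m n v := by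
  induction t generalizing v with
  | zero => rw [pow_zero, pow_zero, Matrix.one_mulVec, one_mul]
  | succ t ih =>
    have h : A ^ (t+1) *ᵥ v = A ^ t *ᵥ (A *ᵥ v) := by
      rw [Matrix.mulVec_mulVec, ← pow_succ]
    rw [h, ih (A *ᵥ v), phi_mulVec m n hm hn A hA v]
    ring

lemma phi_apply (m n : ℕ) (hm : 0 < m) (hn : n = 2^m - 1)
    (v : Fin n → ZMod 2) (i : Fin n) :
    (phi m n v).coeff (((i : ℕ) + 1 : ℕ) : ZMod (2^(m+1))) = v i := by
  have : NeZero (2^(m+1)) := ⟨by positivity⟩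
  have h2m : 2 ≤ 2^m := by
    calc (2:ℕ) = 2^1 := rfl
    _ ≤ 2^m := Nat.pow_le_pow_right (by norm_num) hm
  have hPP : 2^(m+1) = 2 * 2^m := by rw [pow_succ]; ring
  have hcast : ∀ a b : ℕ, a < n → b < n →
      ((a+1 : ℕ) : ZMod (2^(m+1))) = ((b+1 : ℕ) : ZMod (2^(m+1))) → a = b := by
    intro a b ha hb h
    have := congrArg ZMod.val h
    rw [ZMod.val_cast_of_lt (by omega), ZMod.val_cast_of_lt (by omega)] at this
    omega
  have hneg : ∀ a b : ℕ, a < n → b < n →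
      ¬(-((a+1 : ℕ) : ZMod (2^(m+1))) = ((b+1 : ℕ) : ZMod (2^(m+1)))) := by
    intro a b ha hb h
    rw [neg_eq_iff_add_eq_zero, ← Nat.cast_add] at h
    rw [ZMod.natCast_eq_zero_iff] at h
    have := Nat.le_of_dvd (by omega) h
    omega
  unfold phi w
  rw [AddMonoidAlgebra.coeff_sum, Finset.sum_apply']
  rw [Finset.sum_eq_single_of_mem i (Finset.mem_univ _)]
  · rw [AddMonoidAlgebra.coeff_smul_apply, AddMonoidAlgebra.coeff_add, Finsupp.add_apply, AddMonoidAlgebra.coeff_single_apply, AddMonoidAlgebra.coeff_single_apply,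
      if_pos rfl, if_neg (hneg (i:ℕ) (i:ℕ) i.isLt i.isLt), add_zero, smul_eq_mul, mul_one]
  · intro b _ hb
    rw [AddMonoidAlgebra.coeff_smul_apply, AddMonoidAlgebra.coeff_add, Finsupp.add_apply, AddMonoidAlgebra.coeff_single_apply, AddMonoidAlgebra.coeff_single_apply,
      if_neg (fun h => hb (Fin.ext (hcast (b:ℕ) (i:ℕ) b.isLt i.isLt h))),
      if_neg (hneg (b:ℕ) (i:ℕ) b.isLt i.isLt), add_zero, smul_zero]

end PathAuxZZ

open PathAuxZZ in
/-- For `n = 2^m - 1`, the `n × n` matrix over `ℤ/2ℤ` with `a i j = 1` iff `|i - j| = 1`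
satisfies `A ^ n = 0`. -/
theorem pathGraph_adjMatrix_pow_eq_zero (m : ℕ) (hm : 0 < m) (n : ℕ) (hn : n = 2 ^ m - 1)
    (A : Matrix (Fin n) (Fin n) (ZMod 2))
    (hA : ∀ i j, A i j = if ((i : ℤ) - (j : ℤ)).natAbs = 1 then 1 else 0) :
    A ^ n = 0 := by
  have hpow : A ^ (2^m) = 0 := by
    ext i j
    have h1 := phi_pow m n hm hn A hA (2^m) (Pi.single j 1)
    rw [w_pow_eq_zero, zero_mul] at h1
    have h2 := phi_apply m n hm hn ((A ^ (2^m)) *ᵥ Pi.single j 1) i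
    rw [h1, AddMonoidAlgebra.coeff_zero, Finsupp.zero_apply] at h2
    have h3 : ((A ^ (2^m)) *ᵥ Pi.single j 1) i = (A ^ (2^m)) i j * 1 := by
      rw [Matrix.mulVec_single]
      rfl
    rw [h3, mul_one] at h2
    rw [← h2, Matrix.zero_apply]
  have hnil : IsNilpotent A := ⟨2^m, hpow⟩
  have hred := IsNilpotent.eq_zero (Matrix.isNilpotent_charpoly_sub_pow_of_isNilpotent hnil)
  have hc : A.charpoly = Polynomial.X ^ n := by
    rw [← sub_eq_zero]
    rw [Fintype.card_fin] at hred
    exact hred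
  calc A ^ n = Polynomial.aeval A (Polynomial.X ^ n : Polynomial (ZMod 2)) := by
        rw [Polynomial.aeval_X_pow]
    _ = Polynomial.aeval A A.charpoly := by rw [hc]
    _ = 0 := Matrix.aeval_self_charpoly A
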